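/- For each β > 4, there exists p* ∈ (1/2, 1) with p* = 1/(1 + exp(β(1/2 - p*))); hence (p*, 1-p*, 1/2, β) is a logit quantal response equilibrium of the three-player minority game. Moreover, for fixed p₀ ∈ (1/2,1), the map β ↦ 1/(1 + exp(β(1/2 - p₀))) is strictly increasing on (0,∞). -/

import Mathlib

/-- For each β > 4 there is a logit QRE (p, 1-p, 1/2, β) of the three-player
minority game with p ∈ (1/2, 1); moreover for fixed p₀ ∈ (1/2, 1) the map
β ↦ 1/(1 + exp(β(1/2 - p₀))) is strictly increasing on (0, ∞). -/
theorem stmt_18 :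
    (∀ β : ℝ, 4 < β → ∃ p : ℝ, 1 / 2 < p ∧ p < 1 ∧
      p = 1 / (1 + Real.exp (β * (1 / 2 - p))) ∧
      p = 1 / (1 + Real.exp (-(β * (1 - (1 - p) - 1 / 2)))) ∧
      (1 - p) = 1 / (1 + Real.exp (-(β * (1 - p - 1 / 2)))) ∧
      (1 / 2 : ℝ) = 1 / (1 + Real.exp (-(β * (1 - p - (1 - p)))))) ∧
    (∀ p₀ : ℝ, 1 / 2 < p₀ → p₀ < 1 →
      StrictMonoOn (fun β : ℝ => 1 / (1 + Real.exp (β * (1 / 2 - p₀)))) (Set.Ioi 0)) := by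
  constructor
  · intro β hβ
    have hβ0 : (0:ℝ) < β := by linarith
    set t : ℝ := (β - 4) / (4 * β) with ht
    have ht0 : 0 < t := div_pos (by linarith) (by linarith)
    set a : ℝ := 1 / 2 + t with ha
    have ht2 : t < 1 / 2 := by
      rw [ht, div_lt_iff₀ (by positivity)]; nlinarith
    have ha1 : a < 1 := by rw [ha]; linarith
    set h : ℝ → ℝ := fun p => 1 / (1 + Real.exp (β * (1 / 2 - p))) - p with hh
    have hcont : ContinuousOn h (Set.Icc a 1) := by
      apply ContinuousOn.sub _ continuousOn_id
      apply ContinuousOn.div continuousOn_const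
      · exact (Continuous.add continuous_const
          ((Real.continuous_exp.comp (by continuity)))).continuousOn
      · intro x _
        positivity
    have hha : 0 < h a := by
      rw [hh]
      simp only
      have hs : β * (1/2 - a) = -(β * t) := by rw [ha]; ring
      rw [hs]
      have hst : 0 < β * t := by positivity
      have hE : Real.exp (-(β * t)) * (1 + β * t) < 1 := by
        have h1 := Real.add_one_lt_exp (ne_of_gt hst)
        rw [Real.exp_neg]
        rw [inv_mul_lt_iff₀ (Real.exp_pos _), mul_one]
        linarith
      have hE0 : 0 < Real.exp (-(β * t)) := Real.exp_pos _
      have hu : 4 * (β * t) = β - 4 := by rw [ht]; field_simp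
      have key : 2 * t + β * t ^ 2 < β * t / 2 := by nlinarith [hu, hst, hβ0, mul_pos hst hst]
      rw [sub_pos, lt_div_iff₀ (by positivity), ha]
      nlinarith [key, hE, hst, hE0, mul_lt_mul_of_pos_right hE (show (0:ℝ) < 1/2 + t by linarith)]
    have hh1 : h 1 < 0 := by
      rw [hh]
      simp only
      have hE0 : 0 < Real.exp (β * (1/2 - 1)) := Real.exp_pos _
      have : 1 / (1 + Real.exp (β * (1/2 - 1))) < 1 := by
        rw [div_lt_one (by positivity)]; linarith
      linarith
    have ha1' : a ≤ 1 := le_of_lt ha1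
    have := intermediate_value_Icc' ha1' hcont
    have h0mem : (0:ℝ) ∈ Set.Icc (h 1) (h a) := ⟨le_of_lt hh1, le_of_lt hha⟩
    obtain ⟨p, hpmem, hp0⟩ := this h0mem
    have hpa : a ≤ p := hpmem.1
    have hp1 : p ≤ 1 := hpmem.2
    have hpfix : p = 1 / (1 + Real.exp (β * (1 / 2 - p))) := by
      have : 1 / (1 + Real.exp (β * (1/2 - p))) - p = 0 := hp0
      linarith
    have hplt1 : p < 1 := by
      rcases lt_or_eq_of_le hp1 with h' | h'
      · exact h'
      · exfalso
        have : h 1 = 0 := by rw [← h']; exact hp0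
        linarith
    refine ⟨p, by rw [ha] at hpa; linarith, hplt1, hpfix, ?_, ?_, ?_⟩
    · have : -(β * (1 - (1 - p) - 1 / 2)) = β * (1/2 - p) := by ring
      rw [this]; exact hpfix
    · have he : -(β * (1 - p - 1 / 2)) = -(β * (1/2 - p)) := by ring
      rw [he, Real.exp_neg]
      set E := Real.exp (β * (1/2 - p)) with hE
      have hE0 : 0 < E := Real.exp_pos _
      rw [hpfix]
      field_simp
      ring
    · have : -(β * (1 - p - (1 - p))) = 0 := by ring
      rw [this, Real.exp_zero]
      norm_num
  · intro p₀ hp₀ hp₀1 x hx y hy hxy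
    simp only [Set.mem_Ioi] at hx hy
    have hc : 1/2 - p₀ < 0 := by linarith
    have hlt : y * (1/2 - p₀) < x * (1/2 - p₀) := by nlinarith
    have hexp : Real.exp (y * (1/2 - p₀)) < Real.exp (x * (1/2 - p₀)) :=
      Real.exp_lt_exp.mpr hlt
    have h1 : 0 < 1 + Real.exp (y * (1/2 - p₀)) := by positivity
    exact one_div_lt_one_div_of_lt h1 (by linarith)
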